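/- Let R and A be one-dimensional equidimensional (semilocal Noetherian) Cohen–Macaulay rings such that A is a regular fractional ideal of R (in particular R ⊆ A ⊆ Q_R and Q_A = Q_R). If 𝔎 is a canonical ideal of R, then 𝔎 : A is a canonical ideal of A. -/

import Mathlib

/-! Fractional ideals of one-dimensional Cohen–Macaulay rings inside their
total ring of fractions, canonical ideals, Gorensteinness, admissible rings. -/

open scoped Pointwise

section FractionalIdeals

variable {Q : Type*} [CommRing Q]

/-- The colon (quotient) `𝔦 : 𝔧 = {x ∈ Q : x𝔧 ⊆ 𝔦}` of two subsets of `Q`. -/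
def ColonSet (𝔦 𝔧 : Set Q) : Set Q :=
  {x | ∀ y ∈ 𝔧, x * y ∈ 𝔦}

/-- `𝔦 ⊆ Q` is a fractional ideal of the subring `A` of `Q`: an `A`-submodule
of `Q` such that `d𝔦 ⊆ A` for some non-zerodivisor `d` of `A`. -/
def IsFracIdealOf (A : Subring Q) (𝔦 : Set Q) : Prop :=
  (0 : Q) ∈ 𝔦 ∧ (∀ x ∈ 𝔦, ∀ y ∈ 𝔦, x + y ∈ 𝔦) ∧
    (∀ a ∈ A, ∀ x ∈ 𝔦, a * x ∈ 𝔦) ∧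
    ∃ d ∈ A, (∀ y ∈ A, d * y = 0 → y = 0) ∧ ∀ x ∈ 𝔦, d * x ∈ (A : Set Q)

/-- A fractional ideal is regular if it contains a unit of `Q`. -/
def IsRegularFI (𝔦 : Set Q) : Prop :=
  ∃ x ∈ 𝔦, IsUnit x

/-- `𝔦^n` for a fractional ideal `𝔦` of `A` (`𝔦^0 = A`); at each step we take
the additive closure of the set of products. -/
def powFI (A : Subring Q) (𝔦 : Set Q) : ℕ → Set Q
  | 0 => A
  | n + 1 => (AddSubgroup.closure (𝔦 * powFI A 𝔦 n) : AddSubgroup Q)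

/-- The blowup `A^𝔦 = ⋃ₙ (𝔦ⁿ : 𝔦ⁿ)` of a fractional ideal `𝔦` of `A`. -/
def blowupFI (A : Subring Q) (𝔦 : Set Q) : Set Q :=
  ⋃ n : ℕ, ColonSet (powFI A 𝔦 n) (powFI A 𝔦 n)

/-- A fractional ideal `𝔦` of `A` is stable if `A^𝔦 = 𝔦 : 𝔦`. -/
def IsStableFI (A : Subring Q) (𝔦 : Set Q) : Prop :=
  blowupFI A 𝔦 = ColonSet 𝔦 𝔦

/-- `𝔎` is a canonical ideal of the subring `A` of `Q`: a regular fractional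
ideal of `A` with `𝔎 : (𝔎 : 𝔦) = 𝔦` for every regular fractional ideal `𝔦`. -/
def IsCanonicalIdealOf (A : Subring Q) (𝔎 : Set Q) : Prop :=
  IsFracIdealOf A 𝔎 ∧ IsRegularFI 𝔎 ∧
    ∀ 𝔦 : Set Q, IsFracIdealOf A 𝔦 → IsRegularFI 𝔦 →
      ColonSet 𝔎 (ColonSet 𝔎 𝔦) = 𝔦

end FractionalIdeals

section Rings

/-- A one-dimensional semilocal Cohen–Macaulay (Noetherian) ring: Noetherian,
finitely many maximal ideals, Krull dimension one, and no maximal ideal is an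
associated prime (i.e. every localization at a maximal ideal has depth ≥ 1,
which in dimension one is Cohen–Macaulayness). -/
def IsOneDimSemilocalCM (R : Type*) [CommRing R] : Prop :=
  IsNoetherianRing R ∧ {m : Ideal R | m.IsMaximal}.Finite ∧
    ringKrullDim R = 1 ∧
    ∀ m : Ideal R, m.IsMaximal → ¬ IsAssociatedPrime m R

/-- A one-dimensional equidimensional semilocal Cohen–Macaulay ring: as above,
and moreover `dim R/𝔭 = 1` for every minimal prime `𝔭`. -/
def IsOneDimEquidimSemilocalCM (R : Type*) [CommRing R] : Prop :=
  IsOneDimSemilocalCM R ∧ ∀ p ∈ minimalPrimes R, ringKrullDim (R ⧸ p) = 1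

/-- A subring `A` of `Q` (thought of as an integral extension of a base ring
inside its total ring of fractions, so that `Q_A = Q`) is Gorenstein if it is a
one-dimensional equidimensional semilocal Cohen–Macaulay ring which is a
canonical ideal of itself. -/
def IsGorensteinSubring {Q : Type*} [CommRing Q] (A : Subring Q) : Prop :=
  IsOneDimEquidimSemilocalCM A ∧ IsCanonicalIdealOf A (A : Set Q)

/-- Residually rational: for every maximal ideal `𝔫` of the integral closure
`R̄` of `R` in `Q_R`, the natural map `R → R̄/𝔫` is surjective (equivalently
`R/𝔪 = R̄/𝔫` where `𝔪 = 𝔫 ∩ R`). -/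
def ResiduallyRational (R : Type*) [CommRing R] : Prop :=
  ∀ 𝔫 : Ideal (integralClosure R (FractionRing R)), 𝔫.IsMaximal →
    ∀ x : integralClosure R (FractionRing R), ∃ r : R,
      x - algebraMap R (integralClosure R (FractionRing R)) r ∈ 𝔫

/-- Large residue fields: `|R/𝔪| ≥ #(valuation rings of Q_{R_𝔪} over R_𝔪)` for
every maximal ideal `𝔪`; a valuation ring of a ring `Q` is a proper subring `V`
with `Q ∖ V` multiplicatively closed. -/
def LargeResidueFields (R : Type*) [CommRing R] : Prop :=
  ∀ 𝔪 : Ideal R, ∀ h𝔪 : 𝔪.IsMaximal,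
    haveI : 𝔪.IsPrime := h𝔪.isPrime
    Cardinal.mk {V : Subring (FractionRing (Localization.AtPrime 𝔪)) //
        V ≠ ⊤ ∧ (∀ x y, x ∉ V → y ∉ V → x * y ∉ V) ∧
        Set.range (algebraMap (Localization.AtPrime 𝔪)
          (FractionRing (Localization.AtPrime 𝔪))) ⊆ (V : Set _)} ≤
      Cardinal.mk (R ⧸ 𝔪)

/-- An admissible ring: a one-dimensional equidimensional semilocal
Cohen–Macaulay ring which is analytically reduced (the completion at the
Jacobson radical is reduced), residually rational, and has large residue
fields. -/
def IsAdmissibleRing (R : Type*) [CommRing R] : Prop :=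
  IsOneDimEquidimSemilocalCM R ∧
    IsReduced (AdicCompletion (Ideal.jacobson (⊥ : Ideal R)) R) ∧
    ResiduallyRational R ∧ LargeResidueFields R

end Rings

/-- **Lemma.** Let `R` and `A` be one-dimensional equidimensional semilocal
Cohen–Macaulay rings such that `A` is a regular fractional ideal of `R`
(in particular `R ⊆ A ⊆ Q_R`). If `𝔎` is a canonical ideal of `R`, then
`𝔎 : A` is a canonical ideal of `A`. -/
theorem stmt_16 (R : Type*) [CommRing R] (hR : IsOneDimEquidimSemilocalCM R)
    (A : Subring (FractionRing R))
    (hRA : (algebraMap R (FractionRing R)).range ≤ A)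
    (hA : IsOneDimEquidimSemilocalCM A)
    (hAfi : IsFracIdealOf (algebraMap R (FractionRing R)).range (A : Set (FractionRing R)))
    (𝔎 : Set (FractionRing R))
    (h𝔎 : IsCanonicalIdealOf (algebraMap R (FractionRing R)).range 𝔎) :
    IsCanonicalIdealOf A (ColonSet 𝔎 (A : Set (FractionRing R))) := by
  classical
  let Q := FractionRing R
  let R₀ := (algebraMap R Q).range
  obtain ⟨⟨hK0, hKadd, hKmul, d₀, hd₀R, hd₀nzd, hd₀K⟩, ⟨u, huK, huU⟩, hKcan⟩ := h𝔎
  obtain ⟨-, -, -, d₁, hd₁R, hd₁nzd, hd₁A⟩ := hAfi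
  -- a nonzerodivisor witness inside R₀ is a unit of Q
  have unit_of_nzd : ∀ d ∈ R₀, (∀ y ∈ R₀, d * y = 0 → y = 0) → IsUnit d := by
    rintro _ ⟨r, rfl⟩ h
    refine IsLocalization.map_units (M := nonZeroDivisors R) Q ⟨r, ?_⟩
    rw [mem_nonZeroDivisors_iff_right]
    intro s hs
    have h2 : algebraMap R Q r * algebraMap R Q s = 0 := by
      rw [← map_mul, mul_comm, hs, map_zero]
    have := h (algebraMap R Q s) ⟨s, rfl⟩ h2
    exact IsFractionRing.injective R Q (by simpa using this)
  have hd₀U : IsUnit d₀ := unit_of_nzd d₀ hd₀R hd₀nzd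
  have hd₁U : IsUnit d₁ := unit_of_nzd d₁ hd₁R hd₁nzd
  -- 𝔎 : A ⊆ 𝔎
  have hK'K : ∀ x ∈ ColonSet 𝔎 (A : Set Q), x ∈ 𝔎 := fun x hx => by
    simpa using hx 1 (one_mem A)
  -- 𝔎 : A is an A-module
  have hK'mul : ∀ a ∈ A, ∀ x ∈ ColonSet 𝔎 (A : Set Q), a * x ∈ ColonSet 𝔎 (A : Set Q) := by
    intro a ha x hx y hy
    rw [show a * x * y = x * (a * y) by ring]
    exact hx (a * y) (mul_mem ha hy)
  -- colon with an A-module only depends on 𝔎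
  have colon_eq : ∀ 𝔧 : Set Q, (∀ a ∈ A, ∀ y ∈ 𝔧, a * y ∈ 𝔧) →
      ColonSet (ColonSet 𝔎 (A : Set Q)) 𝔧 = ColonSet 𝔎 𝔧 := by
    intro 𝔧 hmod
    ext x
    constructor
    · intro hx y hy
      exact hK'K _ (hx y hy)
    · intro hx y hy a ha
      rw [show x * y * a = x * (a * y) by ring]
      exact hx (a * y) (hmod a ha y hy)
  refine ⟨⟨?_, ?_, hK'mul, d₀, hRA hd₀R, ?_, ?_⟩, ⟨d₁ * u, ?_, hd₁U.mul huU⟩, ?_⟩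
  · intro y hy; simpa using hK0
  · intro x hx x' hx' y hy
    rw [add_mul]
    exact hKadd _ (hx y hy) _ (hx' y hy)
  · intro y hy h0
    exact (hd₀U.mul_right_eq_zero).mp h0
  · intro x hx
    exact hRA (hd₀K x (hK'K x hx))
  · intro a ha
    rw [show d₁ * u * a = (d₁ * a) * u by ring]
    exact hKmul _ (hd₁A a ha) u huK
  · intro 𝔦 h𝔦A h𝔦reg
    obtain ⟨h𝔦0, h𝔦add, h𝔦mulA, e, heA, henzd, he𝔦⟩ := h𝔦A
    -- 𝔦 is a regular fractional ideal of R₀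
    have h𝔦R : IsFracIdealOf R₀ 𝔦 := by
      refine ⟨h𝔦0, h𝔦add, fun r hr x hx => h𝔦mulA r (hRA hr) x hx, d₁ * e, hd₁A e heA, ?_, ?_⟩
      · intro y hy h0
        have h1 : d₁ * (e * y) = 0 := by rw [← mul_assoc]; exact h0
        have h2 : e * y = 0 := hd₁U.mul_right_eq_zero.mp h1
        exact henzd y (hRA hy) h2
      · intro x hx
        rw [mul_assoc]
        exact hd₁A (e * x) (he𝔦 x hx)
    have hmod𝔦 : ∀ a ∈ A, ∀ y ∈ 𝔦, a * y ∈ 𝔦 := h𝔦mulA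
    have hmod' : ∀ a ∈ A, ∀ y ∈ ColonSet (ColonSet 𝔎 (A : Set Q)) 𝔦, a * y ∈
        ColonSet (ColonSet 𝔎 (A : Set Q)) 𝔦 := by
      intro a ha z hz y hy
      rw [show a * z * y = a * (z * y) by ring]
      exact hK'mul a ha _ (hz y hy)
    calc ColonSet (ColonSet 𝔎 (A : Set Q)) (ColonSet (ColonSet 𝔎 (A : Set Q)) 𝔦)
        = ColonSet 𝔎 (ColonSet (ColonSet 𝔎 (A : Set Q)) 𝔦) := colon_eq _ hmod'
      _ = ColonSet 𝔎 (ColonSet 𝔎 𝔦) := by rw [colon_eq 𝔦 hmod𝔦]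
      _ = 𝔦 := hKcan 𝔦 h𝔦R h𝔦reg
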